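/- For every θ > 0, the product of two Gamma distributions with shape 2 and scale θ is invariant for the Immediate Exchange Model: for every bounded measurable function f on [0,∞)², ∫∫ (∫₀¹∫₀¹ f(x(1−u)+yv, y(1−v)+xu) du dv) ν_θ(dx) ν_θ(dy) = ∫∫ f(x,y) ν_θ(dx) ν_θ(dy), where ν_θ is the measure on [0,∞) with density x e^{−x/θ}/θ². -/

import Mathlib

open MeasureTheory

/-- The Gamma distribution with shape parameter 2 and scale parameter θ:
the measure on [0,∞) with density `x e^{−x/θ}/θ²`. -/
noncomputable def gammaShape2 (θ : ℝ) : Measure ℝ :=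
  (volume.restrict (Set.Ici (0 : ℝ))).withDensity
    (fun x => ENNReal.ofReal (x * Real.exp (-x / θ) / θ ^ 2))

open Real Set
open scoped ENNReal

namespace IEM

instance (θ : ℝ) : SFinite (gammaShape2 θ) := by unfold gammaShape2; infer_instance

noncomputable def expM (θ : ℝ) : Measure ℝ :=
  (volume.restrict (Set.Ici (0 : ℝ))).withDensity
    (fun a => ENNReal.ofReal (Real.exp (-a / θ) / θ))

instance (θ : ℝ) : SFinite (expM θ) := by unfold expM; infer_instance

def Tmap : (ℝ × ℝ) × ℝ × ℝ → ℝ × ℝ := fun r =>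
  (r.1.1 * (1 - r.2.1) + r.1.2 * r.2.2, r.1.2 * (1 - r.2.2) + r.1.1 * r.2.1)

lemma Tmap_meas : Measurable Tmap := by unfold Tmap; fun_prop

-- scaling
lemma lintegral_Ioc_scale {x : ℝ} (hx : 0 < x) (H : ℝ → ℝ≥0∞) (hH : Measurable H) :
    ∫⁻ u in Ioc (0:ℝ) 1, H (x * u) = ENNReal.ofReal x⁻¹ * ∫⁻ b in Ioc (0:ℝ) x, H b := by
  have hpre : (fun u : ℝ => x * u) ⁻¹' Ioc (0:ℝ) x = Ioc 0 1 := by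
    ext u
    simp only [mem_preimage, mem_Ioc]
    constructor
    · rintro ⟨h1, h2⟩
      constructor
      · nlinarith
      · nlinarith
    · rintro ⟨h1, h2⟩
      exact ⟨by positivity, by nlinarith⟩
  have hmap : Measure.map (fun u : ℝ => x * u) (volume.restrict (Ioc 0 1))
      = (ENNReal.ofReal |x⁻¹| • volume).restrict (Ioc 0 x) := by
    rw [← hpre, ← Measure.restrict_map (measurable_const_mul x) measurableSet_Ioc,
      Real.map_volume_mul_left hx.ne']
  calc ∫⁻ u in Ioc (0:ℝ) 1, H (x * u)
      = ∫⁻ b, H b ∂(Measure.map (fun u : ℝ => x * u) (volume.restrict (Ioc 0 1))) := by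
        rw [lintegral_map hH (measurable_const_mul x)]
    _ = ENNReal.ofReal x⁻¹ * ∫⁻ b in Ioc (0:ℝ) x, H b := by
        rw [hmap, Measure.restrict_smul, lintegral_smul_measure, abs_of_pos (by positivity), smul_eq_mul]

-- translation
lemma lintegral_Ici_translate (b : ℝ) (H : ℝ → ℝ≥0∞) (hH : Measurable H) :
    ∫⁻ x in Ici b, H x = ∫⁻ a in Ici (0:ℝ), H (a + b) := by
  have hpre : (fun a : ℝ => a + b) ⁻¹' Ici b = Ici 0 := by
    ext a; simp [le_add_iff_nonneg_left]
  have hmap : Measure.map (fun a : ℝ => a + b) (volume.restrict (Ici 0))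
      = volume.restrict (Ici b) := by
    rw [← hpre, ← Measure.restrict_map (measurable_add_const b) measurableSet_Ici,
      (measurePreserving_add_right volume b).map_eq]
  rw [← hmap, lintegral_map hH (measurable_add_const b)]

lemma swap_tri (F : ℝ × ℝ → ℝ≥0∞) (hF : Measurable F) :
    ∫⁻ x in Ioi (0:ℝ), ∫⁻ b in Ioc (0:ℝ) x, F (x, b) =
      ∫⁻ b in Ioi (0:ℝ), ∫⁻ x in Ici b, F (x, b) := by
  have hset : MeasurableSet {p : ℝ × ℝ | 0 < p.2 ∧ p.2 ≤ p.1} := by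
    apply MeasurableSet.inter
    · exact measurableSet_lt measurable_const measurable_snd
    · exact measurableSet_le measurable_snd measurable_fst
  set J : ℝ × ℝ → ℝ≥0∞ := {p : ℝ × ℝ | 0 < p.2 ∧ p.2 ≤ p.1}.indicator F with hJ
  have hJm : Measurable J := hF.indicator hset
  have key : ∀ x : ℝ, ∫⁻ b in Ioc (0:ℝ) x, F (x, b) = ∫⁻ b, J (x, b) := by
    intro x
    rw [← lintegral_indicator measurableSet_Ioc]
    refine lintegral_congr fun b => ?_
    by_cases hb : b ∈ Ioc (0:ℝ) x
    · rw [Set.indicator_of_mem hb, hJ, Set.indicator_of_mem]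
      exact ⟨hb.1, hb.2⟩
    · rw [Set.indicator_of_notMem hb, hJ, Set.indicator_of_notMem]
      intro h; exact hb ⟨h.1, h.2⟩
  have key2 : ∀ b : ℝ, 0 < b → ∫⁻ x, J (x, b) ∂(volume.restrict (Ioi 0)) =
      ∫⁻ x in Ici b, F (x, b) := by
    intro b hb
    have : ∀ x : ℝ, J (x, b) = (Ici b).indicator (fun x => F (x, b)) x := by
      intro x
      simp only [hJ, Set.indicator_apply, mem_setOf_eq, mem_Ici]
      by_cases hx : b ≤ x
      · simp [hx, hb]
      · simp [hx]
    simp_rw [this]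
    rw [lintegral_indicator measurableSet_Ici, Measure.restrict_restrict measurableSet_Ici]
    congr 1
    rw [Set.inter_eq_left.mpr]
    intro x hx; exact lt_of_lt_of_le hb hx
  have key0 : ∀ b : ℝ, b ≤ 0 → ∫⁻ x, J (x, b) ∂(volume.restrict (Ioi 0)) = 0 := by
    intro b hb
    have : ∀ x : ℝ, J (x, b) = 0 := by
      intro x
      rw [hJ, Set.indicator_of_notMem]
      intro h; exact absurd h.1 (not_lt.mpr hb)
    simp_rw [this, lintegral_zero]
  calc ∫⁻ x in Ioi (0:ℝ), ∫⁻ b in Ioc (0:ℝ) x, F (x, b)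
      = ∫⁻ x in Ioi (0:ℝ), ∫⁻ b, J (x, b) := by
        exact lintegral_congr fun x => key x
    _ = ∫⁻ b, ∫⁻ x, J (x, b) ∂(volume.restrict (Ioi 0)) := by
        exact lintegral_lintegral_swap (hJm.comp measurable_id).aemeasurable
    _ = ∫⁻ b in Ioi (0:ℝ), ∫⁻ x, J (x, b) ∂(volume.restrict (Ioi 0)) := by
        rw [← lintegral_add_compl (fun b => ∫⁻ x, J (x, b) ∂(volume.restrict (Ioi 0)))
          measurableSet_Ioi]
        have : ∫⁻ b in (Ioi (0:ℝ))ᶜ, ∫⁻ x, J (x, b) ∂(volume.restrict (Ioi 0)) = 0 := by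
          rw [compl_Ioi]
          rw [setLIntegral_congr_fun measurableSet_Iic
            (fun b hb => key0 b hb), lintegral_zero]
        rw [this, add_zero]
    _ = ∫⁻ b in Ioi (0:ℝ), ∫⁻ x in Ici b, F (x, b) := by
        exact setLIntegral_congr_fun measurableSet_Ioi
          (fun b hb => key2 b hb)

lemma tri2 (c : ℝ → ℝ≥0∞) (hc : Measurable c) :
    ∫⁻ a in Ici (0:ℝ), ∫⁻ s in Ici a, c s = ∫⁻ s in Ici (0:ℝ), ENNReal.ofReal s * c s := by
  have hset : MeasurableSet {p : ℝ × ℝ | p.1 ≤ p.2} :=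
    measurableSet_le measurable_fst measurable_snd
  set J : ℝ × ℝ → ℝ≥0∞ := {p : ℝ × ℝ | p.1 ≤ p.2}.indicator (fun p => c p.2) with hJ
  have hJm : Measurable J := (hc.comp measurable_snd).indicator hset
  have key : ∀ a : ℝ, ∫⁻ s in Ici a, c s = ∫⁻ s, J (a, s) := by
    intro a
    rw [← lintegral_indicator measurableSet_Ici]
    refine lintegral_congr fun s => ?_
    simp only [hJ, Set.indicator_apply, mem_setOf_eq, mem_Ici]
  have key2 : ∀ s : ℝ, ∫⁻ a, J (a, s) ∂(volume.restrict (Ici 0)) =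
      ENNReal.ofReal s * c s := by
    intro s
    have : ∀ a : ℝ, J (a, s) = (Iic s).indicator (fun _ => c s) a := by
      intro a
      simp only [hJ, Set.indicator_apply, mem_setOf_eq, mem_Iic]
    simp_rw [this]
    rw [lintegral_indicator measurableSet_Iic, Measure.restrict_restrict measurableSet_Iic,
      lintegral_const, Measure.restrict_apply MeasurableSet.univ, Set.univ_inter]
    have : Iic s ∩ Ici 0 = Icc 0 s := by ext t; simp [mem_Icc, and_comm]
    rw [this, Real.volume_Icc, sub_zero, mul_comm]
  calc ∫⁻ a in Ici (0:ℝ), ∫⁻ s in Ici a, c s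
      = ∫⁻ a in Ici (0:ℝ), ∫⁻ s, J (a, s) := lintegral_congr fun a => key a
    _ = ∫⁻ s, ∫⁻ a, J (a, s) ∂(volume.restrict (Ici 0)) :=
        lintegral_lintegral_swap hJm.aemeasurable
    _ = ∫⁻ s, ENNReal.ofReal s * c s := lintegral_congr fun s => key2 s
    _ = ∫⁻ s in Ici (0:ℝ), ENNReal.ofReal s * c s := by
        rw [← lintegral_add_compl (fun s => ENNReal.ofReal s * c s) measurableSet_Ici]
        have : ∫⁻ s in (Ici (0:ℝ))ᶜ, ENNReal.ofReal s * c s = 0 := by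
          rw [compl_Ici]
          rw [setLIntegral_congr_fun measurableSet_Iio (
            fun s (hs : s < 0) => by rw [ENNReal.ofReal_of_nonpos hs.le, zero_mul]),
            lintegral_zero]
        rw [this, add_zero]

lemma lintegral_gamma2 (θ : ℝ) (H : ℝ → ℝ≥0∞) (hH : Measurable H) :
    ∫⁻ s, H s ∂gammaShape2 θ
      = ∫⁻ s in Ici (0:ℝ), ENNReal.ofReal (s * exp (-s / θ) / θ ^ 2) * H s := by
  rw [gammaShape2, lintegral_withDensity_eq_lintegral_mul _ (by fun_prop) hH]
  rfl

lemma lintegral_expM (θ : ℝ) (H : ℝ → ℝ≥0∞) (hH : Measurable H) :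
    ∫⁻ t, H t ∂expM θ
      = ∫⁻ t in Ici (0:ℝ), ENNReal.ofReal (exp (-t / θ) / θ) * H t := by
  rw [expM, lintegral_withDensity_eq_lintegral_mul _ (by fun_prop) hH]
  rfl

lemma split (θ : ℝ) (hθ : 0 < θ) (G : ℝ × ℝ → ℝ≥0∞) (hG : Measurable G) :
    ∫⁻ x, (∫⁻ u in Ioc (0:ℝ) 1, G (x * (1 - u), x * u)) ∂gammaShape2 θ
      = ∫⁻ b, ∫⁻ a, G (a, b) ∂expM θ ∂expM θ := by
  set F : ℝ × ℝ → ℝ≥0∞ := fun p => ENNReal.ofReal (exp (-p.1 / θ) / θ ^ 2) * G (p.1 - p.2, p.2)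
    with hF
  have hFm : Measurable F := by
    apply Measurable.mul (by fun_prop)
    exact hG.comp (by fun_prop)
  have step1 : ∫⁻ x, (∫⁻ u in Ioc (0:ℝ) 1, G (x * (1 - u), x * u)) ∂gammaShape2 θ
      = ∫⁻ x in Ici (0:ℝ), ENNReal.ofReal (x * exp (-x / θ) / θ ^ 2) *
          ∫⁻ u in Ioc (0:ℝ) 1, G (x * (1 - u), x * u) := by
    apply lintegral_gamma2
    apply Measurable.lintegral_prod_right (f := fun x u => G (x * (1 - u), x * u))
    exact hG.comp (by fun_prop)
  have step3 : ∀ x ∈ Ioi (0:ℝ),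
      ENNReal.ofReal (x * exp (-x / θ) / θ ^ 2) *
          ∫⁻ u in Ioc (0:ℝ) 1, G (x * (1 - u), x * u)
        = ∫⁻ b in Ioc (0:ℝ) x, F (x, b) := by
    intro x hx
    have hx' : (0:ℝ) < x := hx
    have h1 : ∀ u : ℝ, G (x * (1 - u), x * u) = (fun b => G (x - b, b)) (x * u) := by
      intro u; simp only [mul_one_sub]
    simp_rw [h1]
    rw [lintegral_Ioc_scale hx' (fun b => G (x - b, b)) (hG.comp (by fun_prop)),
      ← mul_assoc, ← ENNReal.ofReal_mul (by positivity),
      show x * exp (-x / θ) / θ ^ 2 * x⁻¹ = exp (-x / θ) / θ ^ 2 by field_simp]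
    exact (lintegral_const_mul _ (show Measurable fun b => G (x - b, b) from
      hG.comp (by fun_prop))).symm
  have step5 : ∀ b ∈ Ioi (0:ℝ),
      ∫⁻ x in Ici b, F (x, b)
        = ENNReal.ofReal (exp (-b / θ) / θ) *
            ∫⁻ a in Ici (0:ℝ), ENNReal.ofReal (exp (-a / θ) / θ) * G (a, b) := by
    intro b _
    rw [lintegral_Ici_translate b (fun x => F (x, b)) (hFm.comp (by fun_prop))]
    have h2 : ∀ a : ℝ, F (a + b, b)
        = ENNReal.ofReal (exp (-b / θ) / θ) * (ENNReal.ofReal (exp (-a / θ) / θ) * G (a, b)) := by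
      intro a
      have : exp (-(a + b) / θ) / θ ^ 2 = (exp (-b / θ) / θ) * (exp (-a / θ) / θ) := by
        rw [div_mul_div_comm, ← Real.exp_add, show -b / θ + -a / θ = -(a + b) / θ by ring]
        ring
      simp only [hF, add_sub_cancel_right, this]
      rw [ENNReal.ofReal_mul (by positivity), mul_assoc]
    simp_rw [h2]
    have hmeas : Measurable fun a : ℝ => ENNReal.ofReal (exp (-a / θ) / θ) * G (a, b) := by
      apply Measurable.mul (by fun_prop)
      exact hG.comp (by fun_prop)
    rw [lintegral_const_mul _ hmeas]
  calc ∫⁻ x, (∫⁻ u in Ioc (0:ℝ) 1, G (x * (1 - u), x * u)) ∂gammaShape2 θ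
      = ∫⁻ x in Ici (0:ℝ), ENNReal.ofReal (x * exp (-x / θ) / θ ^ 2) *
          ∫⁻ u in Ioc (0:ℝ) 1, G (x * (1 - u), x * u) := step1
    _ = ∫⁻ x in Ioi (0:ℝ), ENNReal.ofReal (x * exp (-x / θ) / θ ^ 2) *
          ∫⁻ u in Ioc (0:ℝ) 1, G (x * (1 - u), x * u) := by
        rw [setLIntegral_congr Ioi_ae_eq_Ici]
    _ = ∫⁻ x in Ioi (0:ℝ), ∫⁻ b in Ioc (0:ℝ) x, F (x, b) :=
        setLIntegral_congr_fun measurableSet_Ioi step3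
    _ = ∫⁻ b in Ioi (0:ℝ), ∫⁻ x in Ici b, F (x, b) := swap_tri F hFm
    _ = ∫⁻ b in Ioi (0:ℝ), ENNReal.ofReal (exp (-b / θ) / θ) *
          ∫⁻ a in Ici (0:ℝ), ENNReal.ofReal (exp (-a / θ) / θ) * G (a, b) :=
        setLIntegral_congr_fun measurableSet_Ioi step5
    _ = ∫⁻ b in Ici (0:ℝ), ENNReal.ofReal (exp (-b / θ) / θ) *
          ∫⁻ a in Ici (0:ℝ), ENNReal.ofReal (exp (-a / θ) / θ) * G (a, b) := by
        rw [setLIntegral_congr Ioi_ae_eq_Ici]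
    _ = ∫⁻ b, ∫⁻ a, G (a, b) ∂expM θ ∂expM θ := by
        rw [lintegral_expM θ (fun b => ∫⁻ a, G (a, b) ∂expM θ)]
        · refine setLIntegral_congr_fun measurableSet_Ici
            (fun b _ => ?_)
          rw [lintegral_expM θ (fun a => G (a, b)) (hG.comp (by fun_prop))]
        · apply Measurable.lintegral_prod_right (f := fun b a => G (a, b))
          exact hG.comp (by fun_prop)

lemma merge (θ : ℝ) (hθ : 0 < θ) (H : ℝ → ℝ≥0∞) (hH : Measurable H) :
    ∫⁻ a, ∫⁻ d, H (a + d) ∂expM θ ∂expM θ = ∫⁻ s, H s ∂gammaShape2 θ := by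
  set c : ℝ → ℝ≥0∞ := fun s => ENNReal.ofReal (exp (-s / θ) / θ ^ 2) * H s with hc
  have hcm : Measurable c := Measurable.mul (by fun_prop) hH
  have hinner : ∀ a : ℝ, ∫⁻ d, H (a + d) ∂expM θ = ∫⁻ d in Ici (0:ℝ),
      ENNReal.ofReal (exp (-d / θ) / θ) * H (a + d) :=
    fun a => lintegral_expM θ (fun d => H (a + d)) (hH.comp (by fun_prop))
  have step : ∀ a ∈ Ici (0:ℝ),
      ENNReal.ofReal (exp (-a / θ) / θ) * ∫⁻ d, H (a + d) ∂expM θ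
        = ∫⁻ s in Ici a, c s := by
    intro a _
    rw [hinner a]
    set K : ℝ → ℝ≥0∞ := fun s => ENNReal.ofReal (exp (-(s - a) / θ) / θ) * H s with hK
    have hKm : Measurable K := Measurable.mul (by fun_prop) hH
    have h1 : ∀ d : ℝ, ENNReal.ofReal (exp (-d / θ) / θ) * H (a + d) = K (d + a) := by
      intro d; simp only [hK, add_sub_cancel_right, add_comm a d]
    simp_rw [h1]
    rw [← lintegral_Ici_translate a K hKm]
    rw [← lintegral_const_mul _ hKm]
    refine setLIntegral_congr_fun measurableSet_Ici
      (fun s _ => ?_)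
    simp only [hK, hc, ← mul_assoc]
    congr 1
    rw [← ENNReal.ofReal_mul (by positivity), div_mul_div_comm, ← Real.exp_add,
      show -a / θ + -(s - a) / θ = -s / θ by ring, ← sq]
  have houter : Measurable fun a => ∫⁻ d, H (a + d) ∂expM θ := by
    apply Measurable.lintegral_prod_right (f := fun a d => H (a + d))
    exact hH.comp (by fun_prop)
  rw [lintegral_expM θ _ houter,
    setLIntegral_congr_fun measurableSet_Ici step,
    tri2 c hcm, lintegral_gamma2 θ H hH]
  refine setLIntegral_congr_fun measurableSet_Ici
    (fun s hs => ?_)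
  simp only [hc, ← mul_assoc]
  congr 1
  rw [← ENNReal.ofReal_mul (by exact hs), mul_div_assoc]

lemma merge2 (θ : ℝ) (hθ : 0 < θ) (H : ℝ → ℝ≥0∞) (hH : Measurable H) :
    ∫⁻ a, ∫⁻ d, H (d + a) ∂expM θ ∂expM θ = ∫⁻ s, H s ∂gammaShape2 θ := by
  have h : ∀ a : ℝ, (∫⁻ d, H (d + a) ∂expM θ) = ∫⁻ d, H (a + d) ∂expM θ :=
    fun a => lintegral_congr fun d => by rw [add_comm]
  rw [lintegral_congr h]
  exact merge θ hθ H hH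

lemma lswap {α β : Type*} [MeasurableSpace α] [MeasurableSpace β]
    (m1 : Measure α) (m2 : Measure β) [SFinite m1] [SFinite m2]
    (F : α → β → ℝ≥0∞) (hF : Measurable fun p : α × β => F p.1 p.2) :
    ∫⁻ a, ∫⁻ b, F a b ∂m2 ∂m1 = ∫⁻ b, ∫⁻ a, F a b ∂m1 ∂m2 :=
  lintegral_lintegral_swap hF.aemeasurable

lemma core (θ : ℝ) (hθ : 0 < θ) (g : ℝ × ℝ → ℝ≥0∞) (hg : Measurable g) :
    (∫⁻ x, ∫⁻ y, ∫⁻ u in Ioc (0:ℝ) 1, ∫⁻ v in Ioc (0:ℝ) 1,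
        g (x * (1 - u) + y * v, y * (1 - v) + x * u) ∂volume ∂volume ∂gammaShape2 θ
          ∂gammaShape2 θ)
      = ∫⁻ s, ∫⁻ t, g (s, t) ∂gammaShape2 θ ∂gammaShape2 θ := by
  set μ := gammaShape2 θ with hμ
  set ν := volume.restrict (Ioc (0:ℝ) 1) with hν
  set ε := expM θ with hε
  calc
    (∫⁻ x, ∫⁻ y, ∫⁻ u, ∫⁻ v,
        g (x * (1 - u) + y * v, y * (1 - v) + x * u) ∂ν ∂ν ∂μ ∂μ)
      = ∫⁻ x, ∫⁻ u, ∫⁻ y, ∫⁻ v,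
          g (x * (1 - u) + y * v, y * (1 - v) + x * u) ∂ν ∂μ ∂ν ∂μ := by
        refine lintegral_congr fun x => ?_
        exact lswap μ ν
          (fun y u => ∫⁻ v, g (x * (1 - u) + y * v, y * (1 - v) + x * u) ∂ν)
          (Measurable.lintegral_prod_right'
            (f := fun q : (ℝ × ℝ) × ℝ =>
              g (x * (1 - q.1.2) + q.1.1 * q.2, q.1.1 * (1 - q.2) + x * q.1.2))
            (hg.comp (by fun_prop)))
    _ = ∫⁻ x, ∫⁻ u, ∫⁻ b, ∫⁻ a, g (x * (1 - u) + b, a + x * u) ∂ε ∂ε ∂ν ∂μ := by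
        refine lintegral_congr fun x => lintegral_congr fun u => ?_
        exact split θ hθ (fun q => g (x * (1 - u) + q.2, q.1 + x * u))
          (hg.comp (by fun_prop))
    _ = ∫⁻ x, ∫⁻ b, ∫⁻ u, ∫⁻ a, g (x * (1 - u) + b, a + x * u) ∂ε ∂ν ∂ε ∂μ := by
        refine lintegral_congr fun x => ?_
        exact lswap ν ε
          (fun u b => ∫⁻ a, g (x * (1 - u) + b, a + x * u) ∂ε)
          (Measurable.lintegral_prod_right'
            (f := fun q : (ℝ × ℝ) × ℝ => g (x * (1 - q.1.1) + q.1.2, q.2 + x * q.1.1))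
            (hg.comp (by fun_prop)))
    _ = ∫⁻ b, ∫⁻ x, ∫⁻ u, ∫⁻ a, g (x * (1 - u) + b, a + x * u) ∂ε ∂ν ∂μ ∂ε := by
        exact lswap μ ε
          (fun x b => ∫⁻ u, ∫⁻ a, g (x * (1 - u) + b, a + x * u) ∂ε ∂ν)
          (Measurable.lintegral_prod_right'
            (f := fun q : (ℝ × ℝ) × ℝ =>
              ∫⁻ a, g (q.1.1 * (1 - q.2) + q.1.2, a + q.1.1 * q.2) ∂ε)
            (Measurable.lintegral_prod_right'
              (f := fun r : ((ℝ × ℝ) × ℝ) × ℝ =>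
                g (r.1.1.1 * (1 - r.1.2) + r.1.1.2, r.2 + r.1.1.1 * r.1.2))
              (hg.comp (by fun_prop))))
    _ = ∫⁻ b, ∫⁻ x, ∫⁻ a, ∫⁻ u, g (x * (1 - u) + b, a + x * u) ∂ν ∂ε ∂μ ∂ε := by
        refine lintegral_congr fun b => lintegral_congr fun x => ?_
        exact lswap ν ε (fun u a => g (x * (1 - u) + b, a + x * u))
          (hg.comp (by fun_prop))
    _ = ∫⁻ b, ∫⁻ a, ∫⁻ x, ∫⁻ u, g (x * (1 - u) + b, a + x * u) ∂ν ∂μ ∂ε ∂ε := by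
        refine lintegral_congr fun b => ?_
        exact lswap μ ε
          (fun x a => ∫⁻ u, g (x * (1 - u) + b, a + x * u) ∂ν)
          (Measurable.lintegral_prod_right'
            (f := fun q : (ℝ × ℝ) × ℝ =>
              g (q.1.1 * (1 - q.2) + b, q.1.2 + q.1.1 * q.2))
            (hg.comp (by fun_prop)))
    _ = ∫⁻ b, ∫⁻ a, ∫⁻ d, ∫⁻ c, g (c + b, a + d) ∂ε ∂ε ∂ε ∂ε := by
        refine lintegral_congr fun b => lintegral_congr fun a => ?_
        exact split θ hθ (fun q => g (q.1 + b, a + q.2)) (hg.comp (by fun_prop))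
    _ = ∫⁻ a, ∫⁻ b, ∫⁻ d, ∫⁻ c, g (c + b, a + d) ∂ε ∂ε ∂ε ∂ε := by
        exact lswap ε ε
          (fun b a => ∫⁻ d, ∫⁻ c, g (c + b, a + d) ∂ε ∂ε)
          (Measurable.lintegral_prod_right'
            (f := fun q : (ℝ × ℝ) × ℝ => ∫⁻ c, g (c + q.1.1, q.1.2 + q.2) ∂ε)
            (Measurable.lintegral_prod_right'
              (f := fun r : ((ℝ × ℝ) × ℝ) × ℝ => g (r.2 + r.1.1.1, r.1.1.2 + r.1.2))
              (hg.comp (by fun_prop))))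
    _ = ∫⁻ a, ∫⁻ d, ∫⁻ b, ∫⁻ c, g (c + b, a + d) ∂ε ∂ε ∂ε ∂ε := by
        refine lintegral_congr fun a => ?_
        exact lswap ε ε
          (fun b d => ∫⁻ c, g (c + b, a + d) ∂ε)
          (Measurable.lintegral_prod_right'
            (f := fun q : (ℝ × ℝ) × ℝ => g (q.2 + q.1.1, a + q.1.2))
            (hg.comp (by fun_prop)))
    _ = ∫⁻ a, ∫⁻ d, ∫⁻ s, g (s, a + d) ∂μ ∂ε ∂ε := by
        refine lintegral_congr fun a => lintegral_congr fun d => ?_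
        exact merge2 θ hθ (fun s => g (s, a + d)) (hg.comp (by fun_prop))
    _ = ∫⁻ a, ∫⁻ s, ∫⁻ d, g (s, a + d) ∂ε ∂μ ∂ε := by
        refine lintegral_congr fun a => ?_
        exact lswap ε μ (fun d s => g (s, a + d)) (hg.comp (by fun_prop))
    _ = ∫⁻ s, ∫⁻ a, ∫⁻ d, g (s, a + d) ∂ε ∂ε ∂μ := by
        exact lswap ε μ
          (fun a s => ∫⁻ d, g (s, a + d) ∂ε)
          (Measurable.lintegral_prod_right'
            (f := fun q : (ℝ × ℝ) × ℝ => g (q.1.2, q.1.1 + q.2))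
            (hg.comp (by fun_prop)))
    _ = ∫⁻ s, ∫⁻ t, g (s, t) ∂μ ∂μ := by
        refine lintegral_congr fun s => ?_
        exact merge θ hθ (fun t => g (s, t)) (hg.comp (by fun_prop))

lemma gammaShape2_eq (θ : ℝ) (hθ : 0 < θ) :
    gammaShape2 θ = ProbabilityTheory.gammaMeasure 2 θ⁻¹ := by
  rw [gammaShape2, ProbabilityTheory.gammaMeasure, ← withDensity_indicator measurableSet_Ici]
  congr 1
  ext x
  rw [Set.indicator_apply]
  unfold ProbabilityTheory.gammaPDF ProbabilityTheory.gammaPDFReal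
  by_cases hx : (0:ℝ) ≤ x
  · rw [if_pos (mem_Ici.mpr hx), if_pos hx]
    congr 1
    rw [Real.Gamma_two, Real.rpow_two, show (2:ℝ) - 1 = 1 by norm_num, Real.rpow_one]
    rw [show -(θ⁻¹ * x) = -x / θ by field_simp]
    field_simp
  · rw [if_neg (by simpa using hx), if_neg hx]
    simp

lemma gammaShape2_prob (θ : ℝ) (hθ : 0 < θ) : IsProbabilityMeasure (gammaShape2 θ) := by
  rw [gammaShape2_eq θ hθ]
  exact ProbabilityTheory.isProbabilityMeasure_gammaMeasure (by norm_num) (inv_pos.mpr hθ)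

lemma big (θ : ℝ) (hθ : 0 < θ) (g : ℝ × ℝ → ℝ≥0∞) (hg : Measurable g) :
    ∫⁻ r, g (Tmap r) ∂(((gammaShape2 θ).prod (gammaShape2 θ)).prod
        ((volume.restrict (Ioc (0:ℝ) 1)).prod (volume.restrict (Ioc (0:ℝ) 1))))
      = ∫⁻ p, g p ∂((gammaShape2 θ).prod (gammaShape2 θ)) := by
  set μ := gammaShape2 θ with hμ
  set ν := volume.restrict (Ioc (0:ℝ) 1) with hν
  calc ∫⁻ r, g (Tmap r) ∂(μ.prod μ).prod (ν.prod ν)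
      = ∫⁻ p, ∫⁻ q, g (Tmap (p, q)) ∂ν.prod ν ∂μ.prod μ :=
        lintegral_prod (fun r => g (Tmap r)) (hg.comp Tmap_meas).aemeasurable
    _ = ∫⁻ x, ∫⁻ y, ∫⁻ q, g (Tmap ((x, y), q)) ∂ν.prod ν ∂μ ∂μ :=
        lintegral_prod (fun p => ∫⁻ q, g (Tmap (p, q)) ∂ν.prod ν)
          (Measurable.lintegral_prod_right'
            (f := fun z : (ℝ × ℝ) × ℝ × ℝ => g (Tmap z))
            (hg.comp Tmap_meas)).aemeasurable
    _ = ∫⁻ x, ∫⁻ y, ∫⁻ u, ∫⁻ v,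
          g (x * (1 - u) + y * v, y * (1 - v) + x * u) ∂ν ∂ν ∂μ ∂μ :=
        lintegral_congr fun x => lintegral_congr fun y =>
          lintegral_prod (fun q => g (Tmap ((x, y), q)))
            ((hg.comp Tmap_meas).comp measurable_prodMk_left).aemeasurable
    _ = ∫⁻ s, ∫⁻ t, g (s, t) ∂μ ∂μ := core θ hθ g hg
    _ = ∫⁻ p, g p ∂μ.prod μ := (lintegral_prod g hg.aemeasurable).symm

lemma map_Tmap (θ : ℝ) (hθ : 0 < θ) :
    Measure.map Tmap (((gammaShape2 θ).prod (gammaShape2 θ)).prod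
        ((volume.restrict (Ioc (0:ℝ) 1)).prod (volume.restrict (Ioc (0:ℝ) 1))))
      = (gammaShape2 θ).prod (gammaShape2 θ) := by
  set μ := gammaShape2 θ with hμ
  set ν := volume.restrict (Ioc (0:ℝ) 1) with hν
  ext s hs
  rw [Measure.map_apply Tmap_meas hs]
  have hind : ∀ r, (s.indicator (fun _ => (1:ℝ≥0∞))) (Tmap r)
      = (Tmap ⁻¹' s).indicator (fun _ => (1:ℝ≥0∞)) r := by
    intro r; by_cases h : Tmap r ∈ s <;> simp [Set.indicator_apply, h]
  have h1 : ((μ.prod μ).prod (ν.prod ν)) (Tmap ⁻¹' s)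
      = ∫⁻ r, (s.indicator (fun _ => (1:ℝ≥0∞))) (Tmap r)
          ∂((μ.prod μ).prod (ν.prod ν)) := by
    simp_rw [hind]
    rw [lintegral_indicator (Tmap_meas hs), setLIntegral_one]
  have h2 : (μ.prod μ) s = ∫⁻ p, (s.indicator (fun _ => (1:ℝ≥0∞))) p ∂μ.prod μ := by
    rw [lintegral_indicator hs, setLIntegral_one]
  rw [h1, h2]
  exact big θ hθ _ (measurable_const.indicator hs)

end IEM

/-- For every θ > 0, the product of two Gamma(2,θ) distributions is invariant
for the Immediate Exchange Model: for every bounded measurable f,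
∫∫ (∫₀¹∫₀¹ f(x(1−u)+yv, y(1−v)+xu) du dv) ν_θ(dx) ν_θ(dy) = ∫∫ f dν_θ dν_θ. -/
theorem gamma2_product_invariant
    (θ : ℝ) (hθ : 0 < θ) (f : ℝ × ℝ → ℝ)
    (hf : Measurable f) (C : ℝ) (hbound : ∀ p, |f p| ≤ C) :
    (∫ p : ℝ × ℝ, (∫ u in (0:ℝ)..1, ∫ v in (0:ℝ)..1,
        f (p.1 * (1 - u) + p.2 * v, p.2 * (1 - v) + p.1 * u))
      ∂((gammaShape2 θ).prod (gammaShape2 θ)))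
    = ∫ p : ℝ × ℝ, f p ∂((gammaShape2 θ).prod (gammaShape2 θ)) := by
  haveI : IsProbabilityMeasure (gammaShape2 θ) := IEM.gammaShape2_prob θ hθ
  haveI : IsFiniteMeasure (volume.restrict (Ioc (0:ℝ) 1)) :=
    ⟨by simp [Real.volume_Ioc]⟩
  set μ := gammaShape2 θ with hμ
  set ν := volume.restrict (Ioc (0:ℝ) 1) with hν
  have hint : Integrable (fun r => f (IEM.Tmap r)) ((μ.prod μ).prod (ν.prod ν)) :=
    Integrable.mono' (integrable_const C) (hf.comp IEM.Tmap_meas).aestronglyMeasurable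
      (Filter.Eventually.of_forall fun r => hbound _)
  calc (∫ p : ℝ × ℝ, (∫ u in (0:ℝ)..1, ∫ v in (0:ℝ)..1,
        f (p.1 * (1 - u) + p.2 * v, p.2 * (1 - v) + p.1 * u)) ∂μ.prod μ)
      = ∫ p : ℝ × ℝ, (∫ u, ∫ v, f (IEM.Tmap (p, (u, v))) ∂ν ∂ν) ∂μ.prod μ := by
        refine integral_congr_ae (Filter.Eventually.of_forall fun p => ?_)
        simp only [intervalIntegral.integral_of_le zero_le_one]
        rfl
    _ = ∫ p : ℝ × ℝ, (∫ q, f (IEM.Tmap (p, q)) ∂ν.prod ν) ∂μ.prod μ := by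
        refine integral_congr_ae (Filter.Eventually.of_forall fun p => ?_)
        exact integral_integral
          (Integrable.mono' (integrable_const C)
            ((hf.comp IEM.Tmap_meas).comp measurable_prodMk_left).aestronglyMeasurable
            (Filter.Eventually.of_forall fun q => hbound _))
    _ = ∫ r, f (IEM.Tmap r) ∂((μ.prod μ).prod (ν.prod ν)) := integral_integral hint
    _ = ∫ w, f w ∂(Measure.map IEM.Tmap ((μ.prod μ).prod (ν.prod ν))) :=
        (integral_map IEM.Tmap_meas.aemeasurable hf.aestronglyMeasurable).symm
    _ = ∫ p : ℝ × ℝ, f p ∂μ.prod μ := by rw [IEM.map_Tmap θ hθ]
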